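/- Let E be a directed graph and X ⊆ E⁰. Define inductively Σ₀(X) := X ∪ {w ∈ E⁰ : there is a path from a vertex in X to w}, and Σ_{n+1}(X) := Σ_n(X) ∪ {w ∈ E⁰ : 0 < |s⁻¹(w)| < ∞ and r(e) ∈ Σ_n(X) for every e ∈ E¹ with s(e) = w}. Then the smallest saturated hereditary subset ΣH(X) of E⁰ containing X equals the union ⋃_{n≥0} Σ_n(X). -/
import Mathlib


/-- A (countable) directed graph `E = (E⁰, E¹, r, s)`:
a set of vertices, a set of edges, and range and source maps. -/
structure Digraph' where
  V : Type
  E : Type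
  src : E → V
  rng : E → V

namespace Digraph'

variable (G : Digraph')

/-- `v ≥ w`: there is a path (possibly of length zero) from `v` to `w`. -/
def Reach (v w : G.V) : Prop :=
  Relation.ReflTransGen (fun a b : G.V => ∃ e : G.E, G.src e = a ∧ G.rng e = b) v w

/-- A set `H` of vertices is hereditary if `v ∈ H` and `v ≥ w` imply `w ∈ H`. -/
def Hereditary (H : Set G.V) : Prop :=
  ∀ ⦃v w : G.V⦄, v ∈ H → G.Reach v w → w ∈ H

/-- A set `X` of vertices is saturated if every vertex `v` with `0 < |s⁻¹(v)| < ∞`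
all of whose emitted edges have range in `X` itself belongs to `X`. -/
def Saturated (X : Set G.V) : Prop :=
  ∀ v : G.V, (G.src ⁻¹' {v}).Finite → (G.src ⁻¹' {v}).Nonempty →
    (∀ e : G.E, G.src e = v → G.rng e ∈ X) → v ∈ X

/-- The saturation `Σ(X)`: the smallest saturated set containing `X`. -/
def saturation (X : Set G.V) : Set G.V :=
  ⋂₀ {Y : Set G.V | G.Saturated Y ∧ X ⊆ Y}

/-- `ΣH(X)`: the smallest saturated hereditary set containing `X`. -/
def satHered (X : Set G.V) : Set G.V :=
  ⋂₀ {Y : Set G.V | G.Saturated Y ∧ G.Hereditary Y ∧ X ⊆ Y}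

end Digraph'

namespace Digraph'

variable (G : Digraph')

/-- The inductively defined sets `Σₙ(X)`. -/
def SigmaN (X : Set G.V) : ℕ → Set G.V
  | 0 => X ∪ {w : G.V | ∃ v ∈ X, G.Reach v w}
  | n + 1 => SigmaN X n ∪
      {w : G.V | (G.src ⁻¹' {w}).Nonempty ∧ (G.src ⁻¹' {w}).Finite ∧
        ∀ e : G.E, G.src e = w → G.rng e ∈ SigmaN X n}

end Digraph'

namespace Digraph'

lemma sigmaN_mono (G : Digraph') (X : Set G.V) : Monotone (G.SigmaN X) := by
  apply monotone_nat_of_le_succ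
  intro n
  exact Set.subset_union_left

lemma sigmaN_hereditary (G : Digraph') (X : Set G.V) (n : ℕ) :
    G.Hereditary (G.SigmaN X n) := by
  induction n with
  | zero =>
    intro v w hv hr
    rcases hv with hv | ⟨u, hu, hr'⟩
    · exact Or.inr ⟨v, hv, hr⟩
    · exact Or.inr ⟨u, hu, hr'.trans hr⟩
  | succ n ih =>
    intro v w hv hr
    rcases hv with hv | ⟨hne, hfin, hall⟩
    · exact Or.inl (ih hv hr)
    · rcases hr.cases_head with h | ⟨x, ⟨e, he1, he2⟩, hxw⟩
      · exact h ▸ Or.inr ⟨hne, hfin, hall⟩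
      · exact Or.inl (ih (he2 ▸ hall e he1) hxw)

end Digraph'

/-- `ΣH(X)`, the smallest saturated hereditary set containing `X`,
is the union of the sets `Σₙ(X)`. -/
theorem stmt_3 (G : Digraph') [Countable G.V] [Countable G.E] (X : Set G.V) :
    G.satHered X = ⋃ n : ℕ, G.SigmaN X n := by
  apply le_antisymm
  · -- satHered ⊆ union: show union is saturated, hereditary, ⊇ X
    intro v hv
    apply hv
    refine ⟨?_, ?_, ?_⟩
    · -- saturated
      intro w hfin hne hall
      have : ∃ N, ∀ e : G.E, G.src e = w → G.rng e ∈ G.SigmaN X N := by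
        have : ∀ e : G.src ⁻¹' {w}, ∃ n, G.rng e ∈ G.SigmaN X n := by
          intro ⟨e, he⟩
          simpa using hall e he
        choose f hf using this
        have hft : Finite (G.src ⁻¹' {w}) := hfin.to_subtype
        have : (Set.range f).Finite := Set.finite_range f
        rcases this.bddAbove with ⟨N, hN⟩
        refine ⟨N, fun e he => ?_⟩
        exact G.sigmaN_mono X (hN ⟨⟨e, he⟩, rfl⟩) (hf ⟨e, he⟩)
      rcases this with ⟨N, hN⟩
      exact Set.mem_iUnion.2 ⟨N + 1, Or.inr ⟨hne, hfin, hN⟩⟩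
    · -- hereditary
      intro a b ha hr
      rcases Set.mem_iUnion.1 ha with ⟨n, hn⟩
      exact Set.mem_iUnion.2 ⟨n, G.sigmaN_hereditary X n hn hr⟩
    · -- X ⊆ union
      intro x hx
      exact Set.mem_iUnion.2 ⟨0, Or.inl hx⟩
  · -- union ⊆ satHered
    intro v hv Y hY
    rcases hY with ⟨hsat, hher, hX⟩
    rcases Set.mem_iUnion.1 hv with ⟨n, hn⟩
    clear hv
    induction n generalizing v with
    | zero =>
      rcases hn with h | ⟨u, hu, hr⟩
      · exact hX h
      · exact hher (hX hu) hr
    | succ n ih =>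
      rcases hn with h | ⟨hne, hfin, hall⟩
      · exact ih h
      · exact hsat v hfin hne fun e he => ih (hall e he)
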